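/- If T is a recursive path decomposition of a graph with sources Γ = (G,X), then there exists a path decomposition (P,p) of G such that X is contained in the first bag of (P,p) and width(P,p) = width(T). -/

import Mathlib

open CategoryTheory MonoidalCategory

namespace MWidth

section


variable {V E : Type}

/-- every edge has one or two endpoints -/
def EndsSmall (ends : E → Set V) : Prop := ∀ e, ∃ u w : V, ends e = {u, w}

/-! ### Tree decompositions (Robertson–Seymour style) -/

structure TreeDec (ends : E → Set V) (ι : Type) where
  Y : SimpleGraph ι
  conn : Y.Connected
  acyc : Y.IsAcyclic
  t : ι → Set V
  cover : ∀ v : V, ∃ i, v ∈ t i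
  edge : ∀ e : E, ∃ i, ends e ⊆ t i
  sep : ∀ ⦃i j k : ι⦄ (p : Y.Walk i k), p.IsPath → j ∈ p.support → t i ∩ t k ⊆ t j

noncomputable def TreeDec.width {ends : E → Set V} {ι : Type} (D : TreeDec ends ι) : ℕ :=
  ⨆ i, (D.t i).ncard

/-! ### Recursive tree decompositions -/

inductive RTree (V : Type) where
  | nil : RTree V
  | node : RTree V → Set V → RTree V → RTree V

namespace RTree

noncomputable def width : RTree V → ℕ
  | nil => 0
  | node T1 W T2 => max W.ncard (max T1.width T2.width)

def label : RTree V → Set V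
  | nil => ∅
  | node _ W _ => W

inductive Subtree : RTree V → RTree V → Prop
  | refl (T : RTree V) : Subtree T T
  | left {T' T1 T2 : RTree V} {W : Set V} : Subtree T' T1 → Subtree T' (node T1 W T2)
  | right {T' T1 T2 : RTree V} {W : Set V} : Subtree T' T2 → Subtree T' (node T1 W T2)

end RTree

/-- `IsRTD ends vs es X T` : `T` is a recursive tree decomposition of the graph with
sources `((vs,es),X)` living inside the ambient graph `(V,E,ends)`. -/
def IsRTD (ends : E → Set V) : Set V → Set E → Set V → RTree V → Prop
  | vs, es, _, .nil => vs = ∅ ∧ es = ∅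
  | vs, es, X, .node T1 W T2 =>
      W.Nonempty ∧ W ⊆ vs ∧ X ⊆ W ∧
      ∃ (vs1 vs2 : Set V) (es1 es2 : Set E),
        vs1 ⊆ vs ∧ vs2 ⊆ vs ∧ es1 ⊆ es ∧ es2 ⊆ es ∧
        (∀ e ∈ es1, ends e ⊆ vs1) ∧ (∀ e ∈ es2, ends e ⊆ vs2) ∧
        W ∪ vs1 ∪ vs2 = vs ∧ es1 ∩ es2 = ∅ ∧ vs1 ∩ vs2 ⊆ W ∧
        (∀ e ∈ es \ (es1 ∪ es2), ends e ⊆ W) ∧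
        IsRTD ends vs1 es1 (vs1 ∩ W) T1 ∧ IsRTD ends vs2 es2 (vs2 ∩ W) T2

/-! ### Path decompositions -/

def IsPathDec (ends : E → Set V) (L : List (Set V)) : Prop :=
  (∀ v : V, ∃ W ∈ L, v ∈ W) ∧ (∀ e : E, ∃ W ∈ L, ends e ⊆ W) ∧
    ∀ i j k : ℕ, i ≤ j → j ≤ k → k < L.length →
      L.getD i ∅ ∩ L.getD k ∅ ⊆ L.getD j ∅

/-- width of a list of bags (used both for path decompositions and recursive
path decompositions) -/
noncomputable def pdWidth : List (Set V) → ℕ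
  | [] => 0
  | W :: L => max W.ncard (pdWidth L)

/-- `IsRPD ends vs es X L` : `L` is a recursive path decomposition of `((vs,es),X)`. -/
def IsRPD (ends : E → Set V) : Set V → Set E → Set V → List (Set V) → Prop
  | vs, es, _, [] => vs = ∅ ∧ es = ∅
  | vs, es, X, V1 :: L =>
      V1.Nonempty ∧ V1 ⊆ vs ∧ X ⊆ V1 ∧
      ∃ (vs' : Set V) (es' : Set E),
        vs' ⊆ vs ∧ es' ⊆ es ∧ (∀ e ∈ es', ends e ⊆ vs') ∧
        V1 ∪ vs' = vs ∧ (∀ e ∈ es \ es', ends e ⊆ V1) ∧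
        IsRPD ends vs' es' (V1 ∩ vs') L

/-! ### Branch decompositions -/

/-- binary trees whose nodes are labelled by subgraphs-with-sources `(vs,es,X)` -/
inductive BT (V E : Type) where
  | nil : BT V E
  | leaf : Set V → Set E → Set V → BT V E
  | node : BT V E → Set V → Set E → Set V → BT V E → BT V E

namespace BT

noncomputable def width : BT V E → ℕ
  | nil => 0
  | leaf _ _ X => X.ncard
  | node T1 _ _ X T2 => max X.ncard (max T1.width T2.width)

def labelV : BT V E → Set V
  | nil => ∅
  | leaf vs _ _ => vs
  | node _ vs _ _ _ => vs

def labelX : BT V E → Set V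
  | nil => ∅
  | leaf _ _ X => X
  | node _ _ _ X _ => X

inductive Subtree : BT V E → BT V E → Prop
  | refl (T : BT V E) : Subtree T T
  | left {T' T1 T2 : BT V E} {vs X : Set V} {es : Set E} :
      Subtree T' T1 → Subtree T' (node T1 vs es X T2)
  | right {T' T1 T2 : BT V E} {vs X : Set V} {es : Set E} :
      Subtree T' T2 → Subtree T' (node T1 vs es X T2)

end BT

/-- `IsRBD ends vs es X T` : `T` is a recursive branch decomposition of `((vs,es),X)`. -/
def IsRBD (ends : E → Set V) : Set V → Set E → Set V → BT V E → Prop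
  | _, es, _, .nil => es = ∅
  | vs, es, X, .leaf vs' es' X' => vs' = vs ∧ es' = es ∧ X' = X ∧ ∃ e, es = {e}
  | vs, es, X, .node T1 vs' es' X' T2 =>
      vs' = vs ∧ es' = es ∧ X' = X ∧
      ∃ (vs1 vs2 : Set V) (es1 es2 : Set E),
        vs1 ⊆ vs ∧ vs2 ⊆ vs ∧
        (∀ e ∈ es1, ends e ⊆ vs1) ∧ (∀ e ∈ es2, ends e ⊆ vs2) ∧
        es1 ∪ es2 = es ∧ es1 ∩ es2 = ∅ ∧ vs1 ∪ vs2 = vs ∧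
        IsRBD ends vs1 es1 ((vs1 ∩ vs2) ∪ (X ∩ vs1)) T1 ∧
        IsRBD ends vs2 es2 ((vs1 ∩ vs2) ∪ (X ∩ vs2)) T2

/-- branch decompositions: subcubic trees with leaves in bijection with the edges -/
structure BranchDec (E ι : Type) where
  Y : SimpleGraph ι
  conn : Y.Connected
  acyc : Y.IsAcyclic
  subcubic : ∀ i : ι, (Y.neighborSet i).ncard ≤ 3
  b : {i : ι // (Y.neighborSet i).ncard = 1} ≃ E

/-- the edges of `G` on the `u`-side of the edge `{u,w}` of the decomposition tree -/
def BranchDec.side {E ι : Type} (D : BranchDec E ι) (u w : ι) : Set E :=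
  { e | ∃ l : {i : ι // (D.Y.neighborSet i).ncard = 1},
      (D.Y.deleteEdges {s(u, w)}).Reachable u l.1 ∧ D.b l = e }

def edgeEnds (ends : E → Set V) (A : Set E) : Set V := ⋃ e ∈ A, ends e

noncomputable def BranchDec.order (ends : E → Set V) {ι : Type} (D : BranchDec E ι)
    (u w : ι) : ℕ :=
  (edgeEnds ends (D.side u w) ∩ edgeEnds ends (D.side w u)).ncard

noncomputable def BranchDec.bwidth (ends : E → Set V) {ι : Type} (D : BranchDec E ι) : ℕ :=
  ⨆ p : {p : ι × ι // D.Y.Adj p.1 p.2}, D.order ends p.1.1 p.1.2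

/-! ### min-max widths -/

noncomputable def treewidth (ends : E → Set V) : ℕ :=
  sInf { n | ∃ (ι : Type) (_ : Finite ι) (D : TreeDec ends ι), D.width = n }

noncomputable def pathwidth (ends : E → Set V) : ℕ :=
  sInf { n | ∃ L : List (Set V), IsPathDec ends L ∧ pdWidth L = n }

noncomputable def branchwidth (ends : E → Set V) : ℕ :=
  sInf { n | ∃ (ι : Type) (_ : Fintype ι) (D : BranchDec E ι), D.bwidth ends = n }

end


lemma rpd_bags_subset (ends : E → Set V) :
    ∀ (L : List (Set V)) (vs : Set V) (es : Set E) (X : Set V),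
      IsRPD ends vs es X L → ∀ W ∈ L, W ⊆ vs := by
  intro L
  induction L with
  | nil => intro vs es X _ W hW; simp at hW
  | cons V1 L ih =>
    intro vs es X hT W hW
    obtain ⟨_, hV1, _, vs', es', hvs', _, _, _, _, hrpd⟩ := hT
    rcases List.mem_cons.mp hW with h | h
    · exact h ▸ hV1
    · exact (ih vs' es' (V1 ∩ vs') hrpd W h).trans hvs'

lemma rpd_source (ends : E → Set V) :
    ∀ (L : List (Set V)) (vs : Set V) (es : Set E) (X : Set V),
      IsRPD ends vs es X L → ∀ j m : ℕ, j ≤ m → m < L.length →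
        X ∩ L.getD m ∅ ⊆ L.getD j ∅ := by
  intro L
  induction L with
  | nil => intro vs es X _ j m _ hm; simp at hm
  | cons V1 L ih =>
    intro vs es X hT j m hjm hm
    obtain ⟨_, _, hX, vs', es', hvs', _, _, _, _, hrpd⟩ := hT
    cases j with
    | zero => intro v hv; exact hX hv.1
    | succ j =>
      cases m with
      | zero => omega
      | succ m =>
        intro v hv
        simp only [List.getD_cons_succ] at hv ⊢
        have hmlen : m < L.length := by simpa using hm
        have hmem : L.getD m ∅ ∈ L := by
          rw [List.getD_eq_getElem L ∅ hmlen]; exact List.getElem_mem hmlen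
        have hv' : v ∈ V1 ∩ vs' :=
          ⟨hX hv.1, rpd_bags_subset ends L vs' es' (V1 ∩ vs') hrpd _ hmem hv.2⟩
        exact ih vs' es' (V1 ∩ vs') hrpd j m (by omega) hmlen ⟨hv', hv.2⟩

lemma rpd_sep (ends : E → Set V) :
    ∀ (L : List (Set V)) (vs : Set V) (es : Set E) (X : Set V),
      IsRPD ends vs es X L → ∀ i j k : ℕ, i ≤ j → j ≤ k → k < L.length →
        L.getD i ∅ ∩ L.getD k ∅ ⊆ L.getD j ∅ := by
  intro L
  induction L with
  | nil => intro vs es X _ i j k _ _ hk; simp at hk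
  | cons V1 L ih =>
    intro vs es X hT i j k hij hjk hk
    obtain ⟨_, _, _, vs', es', hvs', _, _, _, _, hrpd⟩ := hT
    cases i with
    | zero =>
      cases j with
      | zero => intro v hv; exact hv.1
      | succ j =>
        cases k with
        | zero => omega
        | succ k =>
          intro v hv
          simp only [List.getD_cons_zero, List.getD_cons_succ] at hv ⊢
          have hklen : k < L.length := by simpa using hk
          have hmem : L.getD k ∅ ∈ L := by
            rw [List.getD_eq_getElem L ∅ hklen]; exact List.getElem_mem hklen
          have hv' : v ∈ V1 ∩ vs' :=
            ⟨hv.1, rpd_bags_subset ends L vs' es' (V1 ∩ vs') hrpd _ hmem hv.2⟩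
          exact rpd_source ends L vs' es' (V1 ∩ vs') hrpd j k (by omega) hklen ⟨hv', hv.2⟩
    | succ i =>
      cases j with
      | zero => omega
      | succ j =>
        cases k with
        | zero => omega
        | succ k =>
          simp only [List.getD_cons_succ]
          exact ih vs' es' (V1 ∩ vs') hrpd i j k (by omega) (by omega) (by simpa using hk)

lemma rpd_cover (ends : E → Set V) :
    ∀ (L : List (Set V)) (vs : Set V) (es : Set E) (X : Set V),
      IsRPD ends vs es X L → ∀ v ∈ vs, ∃ W ∈ L, v ∈ W := by
  intro L
  induction L with
  | nil =>
    intro vs es X hT v hv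
    rw [hT.1] at hv; exact absurd hv (Set.notMem_empty v)
  | cons V1 L ih =>
    intro vs es X hT v hv
    obtain ⟨_, _, _, vs', es', _, _, _, hunion, _, hrpd⟩ := hT
    rw [← hunion] at hv
    rcases hv with hv | hv
    · exact ⟨V1, List.mem_cons_self, hv⟩
    · obtain ⟨W, hW, hvW⟩ := ih vs' es' (V1 ∩ vs') hrpd v hv
      exact ⟨W, List.mem_cons_of_mem _ hW, hvW⟩

lemma rpd_edge (ends : E → Set V) :
    ∀ (L : List (Set V)) (vs : Set V) (es : Set E) (X : Set V),
      IsRPD ends vs es X L → ∀ e ∈ es, ∃ W ∈ L, ends e ⊆ W := by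
  intro L
  induction L with
  | nil =>
    intro vs es X hT e he
    rw [hT.2] at he; exact absurd he (Set.notMem_empty e)
  | cons V1 L ih =>
    intro vs es X hT e he
    obtain ⟨_, _, _, vs', es', _, _, _, _, hrest, hrpd⟩ := hT
    by_cases h : e ∈ es'
    · obtain ⟨W, hW, hsub⟩ := ih vs' es' (V1 ∩ vs') hrpd e h
      exact ⟨W, List.mem_cons_of_mem _ hW, hsub⟩
    · exact ⟨V1, List.mem_cons_self, hrest e ⟨he, h⟩⟩

/-- A recursive path decomposition of `(G,X)` yields a path decomposition
of `G` with `X` inside the first bag and the same width. -/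
theorem stmt3 {V E : Type} [Finite V] [Finite E]
    (ends : E → Set V) (hsmall : EndsSmall ends)
    (X : Set V) (T : List (Set V)) (hT : IsRPD ends Set.univ Set.univ X T) :
    ∃ L : List (Set V), IsPathDec ends L ∧ X ⊆ L.headD ∅ ∧ pdWidth L = pdWidth T := by
  refine ⟨T, ⟨?_, ?_, ?_⟩, ?_, rfl⟩
  · exact fun v => rpd_cover ends T _ _ X hT v (Set.mem_univ v)
  · exact fun e => rpd_edge ends T _ _ X hT e (Set.mem_univ e)
  · exact fun i j k => rpd_sep ends T _ _ X hT i j k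
  · cases T with
    | nil =>
      intro v hv
      have := hT.1
      have : v ∈ (∅ : Set V) := this ▸ Set.mem_univ v
      exact absurd this (Set.notMem_empty v)
    | cons V1 L => exact hT.2.2.1


end MWidth
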